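/- Let f : ℤⁿ → ℂ be rapidly decreasing, i.e. for every s ≥ 0 one has sup_{x ∈ ℤⁿ} |f(x)| (1 + |x|)^s < ∞ (|·| the Euclidean norm). If the operator λ(f) : g ↦ f ♮ g is invertible as a bounded operator on ℓ²(ℤⁿ), then there exists a rapidly decreasing g : ℤⁿ → ℂ with f ♮ g = g ♮ f = δ_0. (That is, the smooth non-commutative torus S(ℤⁿ, θ) of rapidly decreasing sequences is inverse-closed in C*(θ).) -/

import Mathlib

open scoped BigOperators
open Filter Topology

noncomputable section

/-- The cocycle σ(l,m) = ∏_{1 ≤ j < k ≤ n} θ_{k,j}^{l_k m_j}. -/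
def coc {n : ℕ} (θ : Fin n → Fin n → ℂ) (l m : Fin n → ℤ) : ℂ :=
  ∏ p ∈ Finset.univ.filter (fun p : Fin n × Fin n => p.1 < p.2), θ p.2 p.1 ^ (l p.2 * m p.1)

/-- Twisted convolution (f ♮ g)(x) = Σ_y f(y) g(x−y) σ(y, x−y). -/
def tconv {n : ℕ} (σ : (Fin n → ℤ) → (Fin n → ℤ) → ℂ) (f g : (Fin n → ℤ) → ℂ) :
    (Fin n → ℤ) → ℂ :=
  fun x => ∑' y, f y * g (x - y) * σ y (x - y)

/-- δ_y, the indicator of {y}. -/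
def delta {n : ℕ} (y : Fin n → ℤ) : (Fin n → ℤ) → ℂ := fun x => if x = y then 1 else 0

/-- ℓ²(ℤⁿ). -/
abbrev Ltwo (n : ℕ) := lp (fun _ : Fin n → ℤ => ℂ) 2

/-- The Euclidean norm of a point of ℤⁿ. -/
def enorm' {n : ℕ} (x : Fin n → ℤ) : ℝ :=
  Real.sqrt (∑ i : Fin n, ((x i : ℝ)) ^ 2)

/-- f is rapidly decreasing: sup_x |f(x)| (1+|x|)^s < ∞ for every s ≥ 0. -/
def RapidDecay {n : ℕ} (f : (Fin n → ℤ) → ℂ) : Prop :=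
  ∀ s : ℝ, 0 ≤ s → ∃ C : ℝ, ∀ x : Fin n → ℤ, ‖f x‖ * (1 + enorm' x) ^ s ≤ C

namespace St16

variable {n : ℕ}

lemma coc_norm {θ : Fin n → Fin n → ℂ} (hUnit : ∀ j k, ‖θ j k‖ = 1) (l m : Fin n → ℤ) :
    ‖coc θ l m‖ = 1 := by
  rw [coc, norm_prod]
  refine Finset.prod_eq_one fun p _ => ?_
  rw [norm_zpow, hUnit, one_zpow]

variable {θ : Fin n → Fin n → ℂ} (hne : ∀ j k, θ j k ≠ 0)

include hne

lemma coc_add_left (l l' m : Fin n → ℤ) :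
    coc θ (l + l') m = coc θ l m * coc θ l' m := by
  rw [coc, coc, coc, ← Finset.prod_mul_distrib]
  refine Finset.prod_congr rfl fun p _ => ?_
  rw [Pi.add_apply, add_mul, zpow_add₀ (hne _ _)]

lemma coc_add_right (l m m' : Fin n → ℤ) :
    coc θ l (m + m') = coc θ l m * coc θ l m' := by
  rw [coc, coc, coc, ← Finset.prod_mul_distrib]
  refine Finset.prod_congr rfl fun p _ => ?_
  rw [Pi.add_apply, mul_add, zpow_add₀ (hne _ _)]

omit hne

lemma coc_zero_left (m : Fin n → ℤ) : coc θ 0 m = 1 := by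
  rw [coc]; exact Finset.prod_eq_one fun p _ => by simp

lemma coc_zero_right (l : Fin n → ℤ) : coc θ l 0 = 1 := by
  rw [coc]; exact Finset.prod_eq_one fun p _ => by simp

include hne in
lemma coc_comm_identity (x y z : Fin n → ℤ) :
    coc θ (x - y - z) z * coc θ y (x - y) = coc θ (x - z) z * coc θ y (x - y - z) := by
  have h1 : x - y = (x - y - z) + z := by abel
  have h2 : x - z = (x - y - z) + y := by abel
  rw [h1, h2, coc_add_right hne, coc_add_left hne]
  ring

end St16
namespace St16Two
open St16
open scoped ENNReal
variable {n : ℕ}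

/-- Coordinate evaluation as a continuous linear functional on ℓ². -/
def evalCLM (x : Fin n → ℤ) : Ltwo n →L[ℂ] ℂ :=
  LinearMap.mkContinuous
    { toFun := fun h => h x
      map_add' := fun a b => by simp [lp.coeFn_add]
      map_smul' := fun c a => by simp [lp.coeFn_smul] }
    1 (fun h => by simp only [LinearMap.coe_mk, AddHom.coe_mk, one_mul]; exact lp.norm_apply_le_norm two_ne_zero h x)

@[simp] lemma evalCLM_apply (x : Fin n → ℤ) (h : Ltwo n) : evalCLM x h = h x := rfl

lemma two_toReal : (2 : ℝ≥0∞).toReal = 2 := by norm_num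

lemma memℓp_two_iff (f : (Fin n → ℤ) → ℂ) :
    Memℓp f 2 ↔ Summable fun x => ‖f x‖ ^ (2:ℝ) := by
  rw [← two_toReal, memℓp_gen_iff]
  rw [two_toReal]; norm_num

lemma memℓp_shift (y : Fin n → ℤ) (w : (Fin n → ℤ) → ℂ) (hw : ∀ x, ‖w x‖ = 1) (h : Ltwo n) :
    Memℓp (fun x => w x * h (x - y)) 2 := by
  rw [memℓp_two_iff]
  have hs : Summable fun x : Fin n → ℤ => ‖h x‖ ^ (2:ℝ) := by
    rw [← memℓp_two_iff]; exact lp.memℓp h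
  have := (Equiv.subRight y).summable_iff.mpr hs
  refine this.congr fun x => ?_
  simp [Equiv.subRight, hw]

/-- weighted shift `h ↦ (x ↦ w x * h (x - y))` as a contraction of ℓ², for `‖w x‖ = 1`. -/
def shiftOp (y : Fin n → ℤ) (w : (Fin n → ℤ) → ℂ) (hw : ∀ x, ‖w x‖ = 1) :
    Ltwo n →L[ℂ] Ltwo n :=
  LinearMap.mkContinuous
    { toFun := fun h => (⟨fun x => w x * h (x - y), memℓp_shift y w hw h⟩ : Ltwo n)
      map_add' := fun a b => by
        apply lp.ext; funext x
        show w x * (a + b : Ltwo n) (x - y) = w x * a (x - y) + w x * b (x - y)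
        rw [lp.coeFn_add, Pi.add_apply]; ring
      map_smul' := fun c a => by
        apply lp.ext; funext x; simp [lp.coeFn_smul]; ring }
    1 (fun h => by
      simp only [LinearMap.coe_mk, AddHom.coe_mk, one_mul]
      refine lp.norm_le_of_tsum_le (by rw [two_toReal]; norm_num) (norm_nonneg h) ?_
      rw [lp.norm_rpow_eq_tsum (by rw [two_toReal]; norm_num) h]
      have : ∀ x : Fin n → ℤ, ‖w x * h (x - y)‖ ^ (2 : ℝ≥0∞).toReal
          = ‖h (x - y)‖ ^ (2 : ℝ≥0∞).toReal := by
        intro x; rw [norm_mul, hw, one_mul]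
      rw [tsum_congr this]
      exact le_of_eq ((Equiv.subRight y).tsum_eq (fun x => ‖h x‖ ^ (2 : ℝ≥0∞).toReal)))

@[simp] lemma shiftOp_apply (y : Fin n → ℤ) (w : (Fin n → ℤ) → ℂ) (hw : ∀ x, ‖w x‖ = 1)
    (h : Ltwo n) (x : Fin n → ℤ) : shiftOp y w hw h x = w x * h (x - y) := rfl

lemma shiftOp_norm_le (y : Fin n → ℤ) (w : (Fin n → ℤ) → ℂ) (hw : ∀ x, ‖w x‖ = 1) :
    ‖shiftOp y w hw‖ ≤ 1 :=
  LinearMap.mkContinuous_norm_le _ zero_le_one _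

/-- δ₀ as an element of ℓ². -/
def deltaL (y : Fin n → ℤ) : Ltwo n := lp.single 2 y (1 : ℂ)

lemma deltaL_coe (y : Fin n → ℤ) : (deltaL y : (Fin n → ℤ) → ℂ) = delta y := by
  funext x
  by_cases hx : x = y
  · subst hx; simp [deltaL, lp.single_apply_self, delta]
  · simp [deltaL, lp.single_apply_ne _ _ _ hx, delta, hx]

end St16Two
namespace St16Three
open St16 St16Two Complex
open scoped ENNReal

variable {n : ℕ}

/-- ℓ¹-type weight. -/
def Pw (y : Fin n → ℤ) : ℝ := ∑ m, |((y m : ℝ))|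

lemma Pw_nonneg (y : Fin n → ℤ) : 0 ≤ Pw y :=
  Finset.sum_nonneg fun _ _ => abs_nonneg _

/-- the linear functional t ↦ Σ_m y_m t_m. -/
def dotR (y : Fin n → ℤ) : (Fin n → ℝ) →L[ℝ] ℝ :=
  ∑ m, (y m : ℝ) • ContinuousLinearMap.proj m

lemma dotR_apply (y : Fin n → ℤ) (t : Fin n → ℝ) :
    dotR y t = ∑ m, (y m : ℝ) * t m := by
  simp [dotR, ContinuousLinearMap.sum_apply, smul_eq_mul]

lemma dotR_norm_le (y : Fin n → ℤ) : ‖dotR y‖ ≤ Pw y := by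
  refine ContinuousLinearMap.opNorm_le_bound _ (Pw_nonneg y) fun t => ?_
  rw [dotR_apply]
  calc ‖∑ m, (y m : ℝ) * t m‖ ≤ ∑ m, ‖(y m : ℝ) * t m‖ := norm_sum_le _ _
    _ ≤ ∑ m, |((y m : ℝ))| * ‖t‖ := by
        refine Finset.sum_le_sum fun m _ => ?_
        rw [norm_mul, Real.norm_eq_abs, Real.norm_eq_abs]
        have htm : |t m| ≤ ‖t‖ := by
          simpa [Real.norm_eq_abs] using norm_le_pi_norm t m
        exact mul_le_mul_of_nonneg_left htm (abs_nonneg _)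
    _ = Pw y * ‖t‖ := by rw [Pw, Finset.sum_mul]

lemma dotR_zero_right (y : Fin n → ℤ) : dotR y 0 = 0 := by simp [dotR_apply]

lemma dotR_sub_left (a b : Fin n → ℤ) (t : Fin n → ℝ) :
    dotR (a - b) t = dotR a t - dotR b t := by
  simp only [dotR_apply, ← Finset.sum_sub_distrib]
  refine Finset.sum_congr rfl fun m _ => ?_
  rw [Pi.sub_apply, Int.cast_sub]; ring

/-- The phase e^{i ⟨y, t⟩}. -/
def eps (y : Fin n → ℤ) (t : Fin n → ℝ) : ℂ := Complex.exp (Complex.I * (dotR y t : ℝ))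

@[simp] lemma norm_eps (y : Fin n → ℤ) (t : Fin n → ℝ) : ‖eps y t‖ = 1 := by
  rw [eps, Complex.norm_exp]
  simp

@[simp] lemma eps_zero_right (y : Fin n → ℤ) : eps y 0 = 1 := by
  simp [eps, dotR_zero_right]

lemma eps_mul_neg (x : Fin n → ℤ) (t : Fin n → ℝ) : eps x t * eps x (-t) = 1 := by
  rw [eps, eps, ← Complex.exp_add, map_neg]
  norm_num

lemma eps_zero_left (t : Fin n → ℝ) : eps (0 : Fin n → ℤ) t = 1 := by
  have : dotR (0 : Fin n → ℤ) t = 0 := by simp [dotR_apply]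
  simp [eps, this]

lemma eps_shift (x y : Fin n → ℤ) (t : Fin n → ℝ) :
    eps x t * eps (x - y) (-t) = eps y t := by
  rw [eps, eps, eps, ← Complex.exp_add, map_neg]
  congr 1
  have : dotR (x - y) t = dotR x t - dotR y t := dotR_sub_left x y t
  push_cast [this]
  ring

/-- derivative of the phase. -/
lemma hasFDerivAt_eps (y : Fin n → ℤ) (t : Fin n → ℝ) :
    HasFDerivAt (eps y) ((dotR y).smulRight (eps y t * Complex.I)) t := by
  have h0 : HasDerivAt (fun z : ℂ => Complex.exp (Complex.I * z))
      (Complex.exp (Complex.I * (dotR y t : ℝ)) * Complex.I) ((dotR y t : ℝ) : ℂ) := by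
    simpa [mul_comm] using (((hasDerivAt_id ((dotR y t : ℝ) : ℂ)).const_mul Complex.I).cexp)
  have h1 : HasDerivAt (fun r : ℝ => Complex.exp (Complex.I * r))
      (Complex.exp (Complex.I * (dotR y t : ℝ)) * Complex.I) (dotR y t) := h0.comp_ofReal
  have h2 := (h1.hasFDerivAt).comp t (dotR y).hasFDerivAt
  refine h2.congr_fderiv ?_
  ext v
  simp [eps, ContinuousLinearMap.toSpanSingleton_apply, ContinuousLinearMap.smulRight_apply]

variable {W : Type*} [NormedAddCommGroup W] [NormedSpace ℂ W] [CompleteSpace W]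

/-- operator-valued Fourier-type series. -/
def Fser (c : (Fin n → ℤ) → W) (t : Fin n → ℝ) : W := ∑' y, eps y t • c y

/-- derivative coefficients. -/
def cder (c : (Fin n → ℤ) → W) (y : Fin n → ℤ) : (Fin n → ℝ) →L[ℝ] W :=
  (dotR y).smulRight (Complex.I • c y)

lemma cder_norm_le (c : (Fin n → ℤ) → W) (y : Fin n → ℤ) :
    ‖cder c y‖ ≤ ‖c y‖ * Pw y := by
  rw [cder, ContinuousLinearMap.norm_smulRight_apply, norm_smul]
  simp only [Complex.norm_I, one_mul]
  rw [mul_comm]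
  exact mul_le_mul_of_nonneg_left (dotR_norm_le y) (norm_nonneg _)

lemma hasFDerivAt_term (c : (Fin n → ℤ) → W) (y : Fin n → ℤ) (t : Fin n → ℝ) :
    HasFDerivAt (fun t => eps y t • c y) (eps y t • cder c y) t := by
  have h := (hasFDerivAt_eps y t).smul_const (c y)
  refine h.congr_fderiv (Eq.symm ?_)
  ext v
  simp only [cder, ContinuousLinearMap.smulRight_apply, ContinuousLinearMap.smul_apply,
    ContinuousLinearMap.coe_smul', Pi.smul_apply]
  rw [smul_comm (eps y t), smul_smul, ← smul_assoc]

set_option maxHeartbeats 1000000 in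
lemma Fser_hasFDerivAt (c : (Fin n → ℤ) → W)
    (h0 : Summable fun y => ‖c y‖) (h1 : Summable fun y => ‖c y‖ * Pw y) (t : Fin n → ℝ) :
    HasFDerivAt (Fser c) (Fser (cder c) t) t := by
  unfold Fser
  refine hasFDerivAt_tsum (u := fun y => ‖c y‖ * Pw y) h1
    (fun y s => hasFDerivAt_term c y s) (fun y s => ?_) (x₀ := 0) ?_ t
  · refine le_trans (ContinuousLinearMap.opNorm_smul_le _ _) ?_
    rw [norm_eps, one_mul]
    exact cder_norm_le c y
  · refine Summable.of_norm_bounded h0 fun y => ?_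
    refine le_trans (norm_smul_le _ _) ?_
    rw [norm_eps, one_mul]

lemma Fser_differentiable (c : (Fin n → ℤ) → W)
    (h0 : Summable fun y => ‖c y‖) (h1 : Summable fun y => ‖c y‖ * Pw y) :
    Differentiable ℝ (Fser c) :=
  fun t => (Fser_hasFDerivAt c h0 h1 t).differentiableAt

lemma Fser_fderiv (c : (Fin n → ℤ) → W)
    (h0 : Summable fun y => ‖c y‖) (h1 : Summable fun y => ‖c y‖ * Pw y) :
    fderiv ℝ (Fser c) = Fser (cder c) :=
  funext fun t => (Fser_hasFDerivAt c h0 h1 t).fderiv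

/-- Summability condition for all orders. -/
def AllSumm (c : (Fin n → ℤ) → W) : Prop := ∀ k : ℕ, Summable fun y => ‖c y‖ * Pw y ^ k

lemma AllSumm.zero' {c : (Fin n → ℤ) → W} (hc : AllSumm c) : Summable fun y => ‖c y‖ := by
  simpa using hc 0

lemma AllSumm.one' {c : (Fin n → ℤ) → W} (hc : AllSumm c) : Summable fun y => ‖c y‖ * Pw y := by
  simpa using hc 1

lemma AllSumm.cder {c : (Fin n → ℤ) → W} (hc : AllSumm c) : AllSumm (cder c) := by
  intro k
  refine Summable.of_nonneg_of_le (fun y => mul_nonneg (norm_nonneg _) (pow_nonneg (Pw_nonneg y) k))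
    (fun y => ?_) (by simpa [mul_assoc, pow_succ] using hc (k + 1))
  calc ‖St16Three.cder c y‖ * Pw y ^ k ≤ (‖c y‖ * Pw y) * Pw y ^ k :=
        mul_le_mul_of_nonneg_right (cder_norm_le c y) (pow_nonneg (Pw_nonneg y) k)
    _ = ‖c y‖ * Pw y ^ (k + 1) := by ring

lemma Fser_contDiff (k : ℕ) :
    ∀ {W : Type} [NormedAddCommGroup W] [NormedSpace ℂ W] [CompleteSpace W]
      (c : (Fin n → ℤ) → W), AllSumm c → ContDiff ℝ k (Fser c) := by
  induction k with
  | zero =>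
    intro W _ _ _ c hc
    rw [Nat.cast_zero, contDiff_zero]
    exact (Fser_differentiable c hc.zero' hc.one').continuous
  | succ k ih =>
    intro W _ _ _ c hc
    have hcast : ((k + 1 : ℕ) : WithTop ℕ∞) = (k : WithTop ℕ∞) + 1 := by norm_cast
    rw [hcast, contDiff_succ_iff_fderiv]
    refine ⟨Fser_differentiable c hc.zero' hc.one', ?_, ?_⟩
    · intro h; exact absurd h (by simp)
    · rw [Fser_fderiv c hc.zero' hc.one']
      exact ih (cder c) hc.cder

end St16Three
namespace St16Four
open St16 St16Two St16Three
open scoped ENNReal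

lemma summable_one_div_int : Summable (fun r : ℤ => ((1 + |(r : ℝ)|) ^ 2)⁻¹) := by
  have hnat : Summable (fun m : ℕ => ((1 + (m : ℝ)) ^ 2)⁻¹) := by
    have h0 : Summable (fun m : ℕ => 1 / (m : ℝ) ^ 2) :=
      Real.summable_one_div_nat_pow.2 one_lt_two
    have := (summable_nat_add_iff 1).2 h0
    refine this.congr fun m => ?_
    push_cast
    rw [one_div]
    ring_nf
  refine Summable.of_nat_of_neg (hnat.congr fun m => ?_) (hnat.congr fun m => ?_) <;>
    simp [abs_of_nonneg]

lemma summable_pi_prod : ∀ n : ℕ, Summable (fun y : Fin n → ℤ => ∏ i, ((1 + |((y i : ℝ))|) ^ 2)⁻¹)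
  | 0 => by
    have : Finite (Fin 0 → ℤ) := by infer_instance
    exact Summable.of_finite
  | (n + 1) => by
    have ih := summable_pi_prod n
    have hmul := Summable.mul_of_nonneg summable_one_div_int ih
      (fun r => by positivity) (fun u => by positivity)
    rw [← (Fin.consEquiv (fun _ : Fin (n + 1) => ℤ)).summable_iff]
    refine hmul.congr fun p => ?_
    obtain ⟨a, u⟩ := p
    show _ = ∏ i, ((1 + |(((Fin.consEquiv (fun _ : Fin (n + 1) => ℤ)) (a, u) i : ℝ))|) ^ 2)⁻¹
    have hcons : (Fin.consEquiv (fun _ : Fin (n + 1) => ℤ)) (a, u) = Fin.cons a u := rfl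
    rw [hcons, Fin.prod_univ_succ]
    simp

variable {n : ℕ}

lemma enorm'_nonneg (y : Fin n → ℤ) : 0 ≤ enorm' y := Real.sqrt_nonneg _

lemma abs_le_enorm' (y : Fin n → ℤ) (i : Fin n) : |((y i : ℝ))| ≤ enorm' y := by
  rw [enorm', ← Real.sqrt_sq_eq_abs]
  refine Real.sqrt_le_sqrt ?_
  exact Finset.single_le_sum (fun j _ => sq_nonneg ((y j : ℝ))) (Finset.mem_univ i)

lemma rd_allsumm {f : (Fin n → ℤ) → ℂ} (hf : RapidDecay f) (k : ℕ) :
    Summable fun y => ‖f y‖ * Pw y ^ k := by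
  obtain ⟨C, hC⟩ := hf ((k + 2 * n : ℕ) : ℝ) (Nat.cast_nonneg _)
  refine Summable.of_nonneg_of_le
    (fun y => mul_nonneg (norm_nonneg _) (pow_nonneg (Pw_nonneg y) k)) (fun y => ?_)
    (((summable_pi_prod n).mul_left ((n : ℝ) ^ k * C)))
  set e := enorm' y with he
  set E := 1 + e with hE
  have he0 : 0 ≤ e := enorm'_nonneg y
  have hE1 : (1 : ℝ) ≤ E := by simp [hE, he0]
  have hEpos : (0 : ℝ) < E := lt_of_lt_of_le one_pos hE1
  have h1 : ‖f y‖ * E ^ (k + 2 * n) ≤ C := by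
    have := hC y
    rwa [Real.rpow_natCast] at this
  have hPw : Pw y ≤ (n : ℝ) * E := by
    calc Pw y ≤ ∑ _i : Fin n, e :=
          Finset.sum_le_sum fun i _ => abs_le_enorm' y i
      _ = (n : ℝ) * e := by simp [Finset.sum_const, nsmul_eq_mul]
      _ ≤ (n : ℝ) * E := by
          refine mul_le_mul_of_nonneg_left ?_ (by positivity)
          simp [hE]
  have h2 : Pw y ^ k ≤ ((n : ℝ) * E) ^ k := pow_le_pow_left₀ (Pw_nonneg y) hPw k
  have hprod : ∏ i, (1 + |((y i : ℝ))|) ≤ E ^ n := by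
    calc ∏ i, (1 + |((y i : ℝ))|) ≤ ∏ _i : Fin n, E := by
          refine Finset.prod_le_prod (fun i _ => by positivity) (fun i _ => ?_)
          exact add_le_add_right (abs_le_enorm' y i) 1
      _ = E ^ n := by simp [Finset.prod_const]
  have hprodpos : 0 < ∏ i, (1 + |((y i : ℝ))|) :=
    Finset.prod_pos fun i _ => by positivity
  have hC0 : 0 ≤ C := by
    refine le_trans ?_ h1
    positivity
  calc ‖f y‖ * Pw y ^ k ≤ ‖f y‖ * ((n : ℝ) ^ k * E ^ k) := by
        refine mul_le_mul_of_nonneg_left ?_ (norm_nonneg _)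
        rw [← mul_pow]; exact h2
    _ = (n : ℝ) ^ k * (‖f y‖ * E ^ k) := by ring
    _ ≤ (n : ℝ) ^ k * (C / E ^ (2 * n)) := by
        refine mul_le_mul_of_nonneg_left ?_ (by positivity)
        rw [le_div_iff₀ (by positivity)]
        calc ‖f y‖ * E ^ k * E ^ (2 * n) = ‖f y‖ * E ^ (k + 2 * n) := by
              rw [pow_add]; ring
          _ ≤ C := h1
    _ ≤ (n : ℝ) ^ k * (C * ∏ i, ((1 + |((y i : ℝ))|) ^ 2)⁻¹) := by
        refine mul_le_mul_of_nonneg_left ?_ (by positivity)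
        have hsq : (∏ i, (1 + |((y i : ℝ))|)) ^ 2 ≤ E ^ (2 * n) := by
          rw [mul_comm 2 n, pow_mul]
          exact pow_le_pow_left₀ (le_of_lt hprodpos) hprod 2
        have : C / E ^ (2 * n) ≤ C / (∏ i, (1 + |((y i : ℝ))|)) ^ 2 :=
          div_le_div_of_nonneg_left hC0 (by positivity) hsq
        refine le_trans this (le_of_eq ?_)
        rw [div_eq_mul_inv]
        congr 1
        rw [← Finset.prod_pow, Finset.prod_inv_distrib]
    _ = ((n : ℝ) ^ k * C) * ∏ i, ((1 + |((y i : ℝ))|) ^ 2)⁻¹ := by ring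

end St16Four
namespace St16Five
open St16 St16Two St16Three St16Four Complex
open scoped ENNReal

variable {n : ℕ} {θ : Fin n → Fin n → ℂ}

section ops
variable (θ)
/-- twisted left translation by y. -/
def Vop (hUnit : ∀ j k, ‖θ j k‖ = 1) (y : Fin n → ℤ) : Ltwo n →L[ℂ] Ltwo n :=
  shiftOp y (fun x => coc θ y (x - y)) (fun x => coc_norm hUnit y (x - y))

/-- twisted right translation by z. -/
def Rop (hUnit : ∀ j k, ‖θ j k‖ = 1) (z : Fin n → ℤ) : Ltwo n →L[ℂ] Ltwo n :=
  shiftOp z (fun x => coc θ (x - z) z) (fun x => coc_norm hUnit (x - z) z)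

end ops

/-- modulation operator. -/
def Mop (t : Fin n → ℝ) : Ltwo n →L[ℂ] Ltwo n :=
  shiftOp (n := n) 0 (fun x => eps x t) (fun x => norm_eps x t)

lemma Mop_apply (t : Fin n → ℝ) (h : Ltwo n) (x : Fin n → ℤ) :
    Mop t h x = eps x t * h x := by
  show eps x t * h (x - 0) = eps x t * h x
  rw [sub_zero]

lemma Mop_cancel (t : Fin n → ℝ) (h : Ltwo n) : Mop t (Mop (-t) h) = h := by
  apply lp.ext; funext x
  rw [Mop_apply, Mop_apply, ← mul_assoc, eps_mul_neg, one_mul]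

lemma Mop_cancel' (t : Fin n → ℝ) (h : Ltwo n) : Mop (-t) (Mop t h) = h := by
  have := Mop_cancel (-t) h
  rwa [neg_neg] at this

lemma Mop_delta (t : Fin n → ℝ) : Mop t (deltaL (0 : Fin n → ℤ)) = deltaL 0 := by
  apply lp.ext; funext x
  rw [Mop_apply]
  have hc := congrFun (deltaL_coe (0 : Fin n → ℤ)) x
  by_cases hx : x = 0
  · subst hx
    rw [eps_zero_left, one_mul]
  · have : (deltaL (0 : Fin n → ℤ) : (Fin n → ℤ) → ℂ) x = 0 := by
      rw [hc]; simp [delta, hx]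
    rw [this, mul_zero]

variable (hUnit : ∀ j k, ‖θ j k‖ = 1) (f : (Fin n → ℤ) → ℂ)

/-- coefficients of the operator-valued series. -/
def cA (y : Fin n → ℤ) : Ltwo n →L[ℂ] Ltwo n := f y • Vop θ hUnit y

lemma cA_norm_le (y : Fin n → ℤ) : ‖cA hUnit f y‖ ≤ ‖f y‖ := by
  refine le_trans (ContinuousLinearMap.opNorm_smul_le _ _) ?_
  calc ‖f y‖ * ‖Vop θ hUnit y‖ ≤ ‖f y‖ * 1 :=
        mul_le_mul_of_nonneg_left (shiftOp_norm_le _ _ _) (norm_nonneg _)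
    _ = ‖f y‖ := mul_one _

lemma cA_allSumm (hf : RapidDecay f) : AllSumm (cA hUnit f) := by
  intro k
  refine Summable.of_nonneg_of_le
    (fun y => mul_nonneg (norm_nonneg _) (pow_nonneg (Pw_nonneg y) k))
    (fun y => mul_le_mul_of_nonneg_right (cA_norm_le hUnit f y) (pow_nonneg (Pw_nonneg y) k))
    (rd_allsumm hf k)

lemma summable_term (hf : RapidDecay f) (t : Fin n → ℝ) :
    Summable fun y => eps y t • cA hUnit f y := by
  refine Summable.of_norm_bounded ((cA_allSumm hUnit f hf).zero') fun y => ?_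
  refine le_trans (ContinuousLinearMap.opNorm_smul_le _ _) ?_
  rw [norm_eps, one_mul]

/-- coordinates of the operator series. -/
lemma A_apply (hf : RapidDecay f) (t : Fin n → ℝ) (h : Ltwo n) (x : Fin n → ℤ) :
    (Fser (cA hUnit f) t h) x = ∑' y, (f y * eps y t) * h (x - y) * coc θ y (x - y) := by
  have hsum := summable_term hUnit f hf t
  have hmap := ((evalCLM x).comp ((ContinuousLinearMap.apply ℂ (Ltwo n)) h)).map_tsum hsum
  have : (Fser (cA hUnit f) t h) x
      = ((evalCLM x).comp ((ContinuousLinearMap.apply ℂ (Ltwo n)) h)) (Fser (cA hUnit f) t) := rfl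
  rw [this, show Fser (cA hUnit f) t = ∑' y, eps y t • cA hUnit f y from rfl, hmap]
  refine tsum_congr fun y => ?_
  show ((eps y t • cA hUnit f y) h) x = _
  rw [ContinuousLinearMap.smul_apply, lp.coeFn_smul, Pi.smul_apply]
  show eps y t • ((f y • Vop θ hUnit y) h) x = _
  rw [ContinuousLinearMap.smul_apply, lp.coeFn_smul, Pi.smul_apply]
  show eps y t • (f y • ((Vop θ hUnit y h) x)) = _
  have : (Vop θ hUnit y h) x = coc θ y (x - y) * h (x - y) := rfl
  rw [this, smul_eq_mul, smul_eq_mul]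
  ring

variable (T : Ltwo n ≃L[ℂ] Ltwo n)
  (hT : ∀ (h : Ltwo n) (x : Fin n → ℤ), (T h : (Fin n → ℤ) → ℂ) x = tconv (coc θ) f (⇑h) x)

include hT

lemma A_zero (hf : RapidDecay f) :
    Fser (cA hUnit f) 0 = (T : Ltwo n →L[ℂ] Ltwo n) := by
  refine ContinuousLinearMap.ext fun h => ?_
  apply lp.ext; funext x
  rw [A_apply hUnit f hf]
  have : ((T : Ltwo n →L[ℂ] Ltwo n) h : (Fin n → ℤ) → ℂ) x = tconv (coc θ) f (⇑h) x := hT h x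
  rw [this, tconv]
  refine tsum_congr fun y => ?_
  rw [eps_zero_right, mul_one]

lemma A_conj (hf : RapidDecay f) (t : Fin n → ℝ) :
    Fser (cA hUnit f) t
      = ((Mop t).comp ((T : Ltwo n →L[ℂ] Ltwo n))).comp (Mop (-t)) := by
  refine ContinuousLinearMap.ext fun h => ?_
  apply lp.ext; funext x
  rw [A_apply hUnit f hf]
  have hR : (((Mop t).comp ((T : Ltwo n →L[ℂ] Ltwo n))).comp (Mop (-t)) h) x
      = eps x t * (T (Mop (-t) h) : (Fin n → ℤ) → ℂ) x := by
    rw [ContinuousLinearMap.comp_apply, ContinuousLinearMap.comp_apply]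
    exact Mop_apply t _ x
  rw [hR, hT (Mop (-t) h) x, tconv, ← tsum_mul_left]
  refine tsum_congr fun y => ?_
  rw [Mop_apply]
  have := eps_shift x y t
  calc (f y * eps y t) * h (x - y) * coc θ y (x - y)
      = (eps x t * eps (x - y) (-t)) * f y * h (x - y) * coc θ y (x - y) := by rw [this]; ring
    _ = eps x t * (f y * (eps (x - y) (-t) * h (x - y)) * coc θ y (x - y)) := by ring

/-- the operator A t as a unit of B(ℓ²). -/
def Aunit (hf : RapidDecay f) (t : Fin n → ℝ) : (Ltwo n →L[ℂ] Ltwo n)ˣ where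
  val := Fser (cA hUnit f) t
  inv := ((Mop t).comp ((T.symm : Ltwo n →L[ℂ] Ltwo n))).comp (Mop (-t))
  val_inv := by
    rw [A_conj hUnit f T hT hf t]
    refine ContinuousLinearMap.ext fun h => ?_
    rw [ContinuousLinearMap.mul_apply, ContinuousLinearMap.one_apply]
    simp only [ContinuousLinearMap.comp_apply, ContinuousLinearEquiv.coe_coe]
    rw [Mop_cancel', T.apply_symm_apply, Mop_cancel]
  inv_val := by
    rw [A_conj hUnit f T hT hf t]
    refine ContinuousLinearMap.ext fun h => ?_
    rw [ContinuousLinearMap.mul_apply, ContinuousLinearMap.one_apply]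
    simp only [ContinuousLinearMap.comp_apply, ContinuousLinearEquiv.coe_coe]
    rw [Mop_cancel', T.symm_apply_apply, Mop_cancel]

lemma K_eq (hf : RapidDecay f) (t : Fin n → ℝ) :
    Ring.inverse (Fser (cA hUnit f) t)
      = ((Mop t).comp ((T.symm : Ltwo n →L[ℂ] Ltwo n))).comp (Mop (-t)) := by
  have h1 : Fser (cA hUnit f) t = ((Aunit hUnit f T hT hf t : (Ltwo n →L[ℂ] Ltwo n)ˣ) : Ltwo n →L[ℂ] Ltwo n) := rfl
  rw [h1, Ring.inverse_unit]
  rfl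

lemma K_delta (hf : RapidDecay f) (t : Fin n → ℝ) (x : Fin n → ℤ) :
    (Ring.inverse (Fser (cA hUnit f) t) (deltaL (0 : Fin n → ℤ))) x
      = eps x t * (T.symm (deltaL 0) : (Fin n → ℤ) → ℂ) x := by
  rw [K_eq hUnit f T hT hf t]
  simp only [ContinuousLinearMap.comp_apply, ContinuousLinearEquiv.coe_coe]
  rw [Mop_delta, Mop_apply]

/-- smoothness of the inverse family. -/
lemma K_contDiff (hf : RapidDecay f) :
    ContDiff ℝ ((⊤ : ℕ∞) : WithTop ℕ∞) (fun t => Ring.inverse (Fser (cA hUnit f) t)) := by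
  have hA : ContDiff ℝ ((⊤ : ℕ∞) : WithTop ℕ∞) (Fser (cA hUnit f)) :=
    contDiff_infty.2 fun k => Fser_contDiff k (cA hUnit f) (cA_allSumm hUnit f hf)
  rw [contDiff_iff_contDiffAt]
  intro t
  exact (contDiffAt_ringInverse ℝ (Aunit hUnit f T hT hf t)).comp t hA.contDiffAt

end St16Five
namespace St16Six
open St16 St16Two St16Three St16Four St16Five Complex

variable {n : ℕ}

/-- The class of sequences h arising as coordinate families of a smooth operator family
with modulation covariance. -/
def PC (h : (Fin n → ℤ) → ℂ) : Prop :=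
  ∃ F : (Fin n → ℝ) → (Ltwo n →L[ℂ] Ltwo n),
    ContDiff ℝ ((⊤ : ℕ∞) : WithTop ℕ∞) F ∧
    ∀ (t : Fin n → ℝ) (x : Fin n → ℤ), ((F t) (deltaL 0)) x = eps x t * h x

lemma PC.bound {h : (Fin n → ℤ) → ℂ} (hp : PC h) : ∃ C : ℝ, ∀ x, ‖h x‖ ≤ C := by
  obtain ⟨F, _, hco⟩ := hp
  refine ⟨‖(F 0) (deltaL 0)‖, fun x => ?_⟩
  have := hco 0 x
  rw [eps_zero_right, one_mul] at this
  rw [← this]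
  exact lp.norm_apply_le_norm two_ne_zero _ x

lemma PC.zero : PC (fun _ : Fin n → ℤ => (0 : ℂ)) := by
  refine ⟨0, contDiff_const, fun t x => ?_⟩
  simp

lemma PC.smul {h : (Fin n → ℤ) → ℂ} (a : ℂ) (hp : PC h) : PC (fun x => a * h x) := by
  obtain ⟨F, hF, hco⟩ := hp
  refine ⟨fun t => a • F t, hF.const_smul a, fun t x => ?_⟩
  rw [ContinuousLinearMap.smul_apply, lp.coeFn_smul, Pi.smul_apply, hco t x, smul_eq_mul]
  ring

lemma PC.add {h₁ h₂ : (Fin n → ℤ) → ℂ} (hp₁ : PC h₁) (hp₂ : PC h₂) :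
    PC (fun x => h₁ x + h₂ x) := by
  obtain ⟨F₁, hF₁, hco₁⟩ := hp₁
  obtain ⟨F₂, hF₂, hco₂⟩ := hp₂
  refine ⟨fun t => F₁ t + F₂ t, hF₁.add hF₂, fun t x => ?_⟩
  rw [ContinuousLinearMap.add_apply, lp.coeFn_add, Pi.add_apply, hco₁ t x, hco₂ t x]
  ring

lemma PC.congr {h₁ h₂ : (Fin n → ℤ) → ℂ} (hp : PC h₁) (he : ∀ x, h₂ x = h₁ x) : PC h₂ := by
  have : h₂ = h₁ := funext he
  rwa [this]

lemma dotR_single (x : Fin n → ℤ) (j : Fin n) :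
    dotR x (Pi.single j (1 : ℝ)) = (x j : ℝ) := by
  rw [dotR_apply]
  rw [Finset.sum_eq_single j]
  · simp
  · intro m _ hm; simp [Pi.single_apply, hm]
  · intro hj; exact absurd (Finset.mem_univ j) hj

set_option maxHeartbeats 1000000 in
lemma PC.mulI {h : (Fin n → ℤ) → ℂ} (j : Fin n) (hp : PC h) :
    PC (fun x => (Complex.I * ((x j : ℝ) : ℂ)) * h x) := by
  obtain ⟨F, hF, hco⟩ := hp
  have hFd : ContDiff ℝ ((⊤ : ℕ∞) : WithTop ℕ∞) (fderiv ℝ F) :=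
    hF.fderiv_right (by exact_mod_cast le_top)
  have hsm : ContDiff ℝ ((⊤ : ℕ∞) : WithTop ℕ∞)
      (fun t => (ContinuousLinearMap.apply ℝ (Ltwo n →L[ℂ] Ltwo n) (Pi.single j (1:ℝ)))
        (fderiv ℝ F t)) := by
    exact (ContinuousLinearMap.apply ℝ (Ltwo n →L[ℂ] Ltwo n) (Pi.single j (1:ℝ))).contDiff.comp hFd
  refine ⟨fun t => (ContinuousLinearMap.apply ℝ (Ltwo n →L[ℂ] Ltwo n) (Pi.single j (1:ℝ)))
      (fderiv ℝ F t), hsm, fun t x => ?_⟩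
  -- coordinate functional
  set Φ : (Ltwo n →L[ℂ] Ltwo n) →L[ℝ] ℂ :=
    ((evalCLM x).comp ((ContinuousLinearMap.apply ℂ (Ltwo n)) (deltaL 0))).restrictScalars ℝ with hΦ
  have hΦF : ∀ s, Φ (F s) = (h x) • eps x s := by
    intro s
    have : Φ (F s) = ((F s) (deltaL 0)) x := rfl
    rw [this, hco s x, smul_eq_mul]
    ring
  have hd1 : HasFDerivAt (fun s => Φ (F s)) (Φ.comp (fderiv ℝ F t)) t := by
    have hdF : HasFDerivAt F (fderiv ℝ F t) t :=
      (hF.differentiable (by simp) t).hasFDerivAt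
    exact Φ.hasFDerivAt.comp t hdF
  have hd2 : HasFDerivAt (fun s => Φ (F s)) ((h x) • ((dotR x).smulRight (eps x t * Complex.I))) t := by
    have := (hasFDerivAt_eps x t).const_smul (h x)
    refine HasFDerivAt.congr_of_eventuallyEq this ?_
    filter_upwards with s
    rw [hΦF s]; rfl
  have huniq := hd1.unique hd2
  have := congrArg (fun (L : (Fin n → ℝ) →L[ℝ] ℂ) => L (Pi.single j (1:ℝ))) huniq
  simp only [ContinuousLinearMap.comp_apply, ContinuousLinearMap.smul_apply,
    ContinuousLinearMap.smulRight_apply] at this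
  have hval : Φ (fderiv ℝ F t (Pi.single j (1:ℝ)))
      = (h x) • ((dotR x (Pi.single j (1:ℝ))) • (eps x t * Complex.I)) := this
  rw [dotR_single] at hval
  have hgoal : (((ContinuousLinearMap.apply ℝ (Ltwo n →L[ℂ] Ltwo n) (Pi.single j (1:ℝ))) (fderiv ℝ F t)) (deltaL 0)) x
      = Φ (fderiv ℝ F t (Pi.single j (1:ℝ))) := rfl
  rw [hgoal, hval, smul_eq_mul, Complex.real_smul]
  ring

lemma PC.mulX {h : (Fin n → ℤ) → ℂ} (j : Fin n) (hp : PC h) :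
    PC (fun x => ((x j : ℝ) : ℂ) * h x) := by
  have h1 := (hp.mulI j).smul (-Complex.I)
  refine h1.congr fun x => ?_
  rw [show -Complex.I * (Complex.I * ((x j : ℝ) : ℂ) * h x)
      = (-(Complex.I * Complex.I)) * (((x j : ℝ) : ℂ) * h x) from by ring, Complex.I_mul_I]
  ring

lemma PC.sum {ι : Type*} (s : Finset ι) (h : ι → (Fin n → ℤ) → ℂ)
    (hp : ∀ i ∈ s, PC (h i)) : PC (fun x => ∑ i ∈ s, h i x) := by
  classical
  induction s using Finset.induction_on with
  | empty => exact PC.zero.congr fun x => by simp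
  | insert a s' hnotmem ih =>
    have ha := hp a (Finset.mem_insert_self a s')
    have hs' := ih fun i hi => hp i (Finset.mem_insert_of_mem hi)
    exact (ha.add hs').congr fun x => by rw [Finset.sum_insert hnotmem]

/-- closure under multiplication by (1 + Σ x_i²). -/
lemma PC.mulQ {h : (Fin n → ℤ) → ℂ} (hp : PC h) :
    PC (fun x => ((1 + ∑ i, ((x i : ℝ)) ^ 2 : ℝ) : ℂ) * h x) := by
  have hsum : PC (fun x => ∑ i : Fin n, ((x i : ℝ) : ℂ) * (((x i : ℝ) : ℂ) * h x)) :=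
    PC.sum Finset.univ _ (fun i _ => (hp.mulX i).mulX i)
  refine (hp.add hsum).congr fun x => ?_
  push_cast
  rw [add_mul, one_mul]
  congr 1
  rw [Finset.sum_mul]
  refine Finset.sum_congr rfl fun i _ => by ring

lemma PC.qpow {g : (Fin n → ℤ) → ℂ} (hg : PC g) (m : ℕ) :
    PC (fun x => ((1 + ∑ i, ((x i : ℝ)) ^ 2 : ℝ) : ℂ) ^ m * g x) := by
  induction m with
  | zero => exact hg.congr fun x => by simp
  | succ m ih =>
    refine ih.mulQ.congr fun x => ?_
    rw [pow_succ]
    ring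

end St16Six
namespace St16Seven
open St16 St16Two St16Three St16Four St16Five St16Six Complex

variable {n : ℕ} {θ : Fin n → Fin n → ℂ}
variable (hUnit : ∀ j k, ‖θ j k‖ = 1) (hne : ∀ j k, θ j k ≠ 0)
variable (f : (Fin n → ℤ) → ℂ) (T : Ltwo n ≃L[ℂ] Ltwo n)
variable (hT : ∀ (h : Ltwo n) (x : Fin n → ℤ), (T h : (Fin n → ℤ) → ℂ) x = tconv (coc θ) f (⇑h) x)

lemma Rop_apply (z : Fin n → ℤ) (h : Ltwo n) (x : Fin n → ℤ) :
    Rop θ hUnit z h x = coc θ (x - z) z * h (x - z) := rfl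

lemma Rop_norm_apply_le (z : Fin n → ℤ) (u : Ltwo n) : ‖Rop θ hUnit z u‖ ≤ ‖u‖ := by
  refine le_trans ((Rop θ hUnit z).le_opNorm u) ?_
  calc ‖Rop θ hUnit z‖ * ‖u‖ ≤ 1 * ‖u‖ :=
        mul_le_mul_of_nonneg_right (shiftOp_norm_le _ _ _) (norm_nonneg _)
    _ = ‖u‖ := one_mul _

include hT hne in
lemma T_comm_R (z : Fin n → ℤ) (h : Ltwo n) :
    T (Rop θ hUnit z h) = Rop θ hUnit z (T h) := by
  apply lp.ext; funext x
  rw [hT (Rop θ hUnit z h) x]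
  have hR : (Rop θ hUnit z (T h) : (Fin n → ℤ) → ℂ) x
      = coc θ (x - z) z * (T h : (Fin n → ℤ) → ℂ) (x - z) := rfl
  rw [hR, hT h (x - z), tconv, tconv, ← tsum_mul_left]
  refine tsum_congr fun y => ?_
  have hR2 : (Rop θ hUnit z h : Ltwo n) (x - y) = coc θ (x - y - z) z * h (x - y - z) := rfl
  rw [hR2]
  rw [sub_right_comm x z y]
  have key := coc_comm_identity hne x y z
  calc f y * (coc θ (x - y - z) z * h (x - y - z)) * coc θ y (x - y)
      = (coc θ (x - y - z) z * coc θ y (x - y)) * (f y * h (x - y - z)) := by ring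
    _ = (coc θ (x - z) z * coc θ y (x - y - z)) * (f y * h (x - y - z)) := by rw [key]
    _ = coc θ (x - z) z * (f y * h (x - y - z) * coc θ y (x - y - z)) := by ring

include hT hne in
lemma Tsymm_comm_R (z : Fin n → ℤ) (h : Ltwo n) :
    T.symm (Rop θ hUnit z h) = Rop θ hUnit z (T.symm h) := by
  rw [ContinuousLinearEquiv.symm_apply_eq]
  rw [T_comm_R hUnit hne f T hT z (T.symm h), T.apply_symm_apply]

lemma summable_fR (hf : RapidDecay f) (u : Ltwo n) :
    Summable fun z => f z • Rop θ hUnit z u := by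
  have h0 : Summable fun z => ‖f z‖ := by
    simpa using rd_allsumm hf 0
  refine Summable.of_norm_bounded (h0.mul_right ‖u‖) fun z => ?_
  rw [norm_smul]
  exact mul_le_mul_of_nonneg_left (Rop_norm_apply_le hUnit z u) (norm_nonneg _)

include hT in
lemma T_delta (hf : RapidDecay f) :
    T (deltaL (0 : Fin n → ℤ)) = ∑' z, f z • Rop θ hUnit z (deltaL 0) := by
  apply lp.ext; funext x
  have hsum := summable_fR hUnit f hf (deltaL (0 : Fin n → ℤ))
  have hmap := (evalCLM x).map_tsum hsum
  refine Eq.trans ?_ hmap.symm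
  have hterm : ∀ z, (evalCLM x) (f z • Rop θ hUnit z (deltaL (0:Fin n → ℤ)))
      = f z * (coc θ (x - z) z * delta (0:Fin n → ℤ) (x - z)) := by
    intro z
    have : (evalCLM x) (f z • Rop θ hUnit z (deltaL (0:Fin n → ℤ)))
        = f z • ((Rop θ hUnit z (deltaL 0) : Ltwo n) x) := by
      rw [map_smul]; rfl
    rw [this, Rop_apply, smul_eq_mul]
    congr 2
    exact congrFun (deltaL_coe (0 : Fin n → ℤ)) (x - z)
  rw [tsum_congr hterm]
  rw [tsum_eq_single x ?_]
  · rw [hT (deltaL 0) x, tconv]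
    rw [tsum_eq_single x ?_]
    · rw [sub_self]
      have h1 : delta (0 : Fin n → ℤ) (0 : Fin n → ℤ) = 1 := by simp [delta]
      have hc : (deltaL (0:Fin n → ℤ) : (Fin n → ℤ) → ℂ) (0 : Fin n → ℤ) = 1 := by
        rw [congrFun (deltaL_coe (0 : Fin n → ℤ)) 0]; exact h1
      rw [hc, coc_zero_right, coc_zero_left, h1]
      ring
    · intro y hy
      have : (deltaL (0:Fin n → ℤ) : (Fin n → ℤ) → ℂ) (x - y) = 0 := by
        rw [congrFun (deltaL_coe (0 : Fin n → ℤ)) (x - y)]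
        have : x - y ≠ 0 := sub_ne_zero.2 (fun hxy => hy hxy.symm)
        simp [delta, this]
      rw [this]; ring
  · intro z hz
    have : delta (0 : Fin n → ℤ) (x - z) = 0 := by
      have hxz : x - z ≠ 0 := sub_ne_zero.2 (fun h' => hz h'.symm)
      simp [delta, hxz]
    rw [this]; ring

include hUnit hT hne in
set_option synthInstance.maxHeartbeats 1000000 in
set_option maxHeartbeats 1000000 in
lemma right_inverse_eq (hf : RapidDecay f) :
    tconv (coc θ) (⇑(T.symm (deltaL (0:Fin n → ℤ)))) f = delta 0 := by
  set g2 : Ltwo n := T.symm (deltaL (0:Fin n → ℤ)) with hg2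
  funext x
  -- identify tconv g2 f x with coordinates of ∑' z, f z • Rop z g2
  have hsumg := summable_fR hUnit f hf g2
  have hmap := (evalCLM x).map_tsum hsumg
  have e1 : tconv (coc θ) (⇑g2) f x = ∑' z, f z * (coc θ (x - z) z * g2 (x - z)) := by
    rw [tconv]
    rw [← (Equiv.subLeft x).tsum_eq (fun y => (g2 : (Fin n → ℤ) → ℂ) y * f (x - y) * coc θ y (x - y))]
    refine tsum_congr fun z => ?_
    have hz : (Equiv.subLeft x) z = x - z := rfl
    rw [hz, sub_sub_cancel]
    ring
  have e2 : (∑' z, f z • Rop θ hUnit z g2 : Ltwo n) x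
      = ∑' z, f z * (coc θ (x - z) z * g2 (x - z)) := by
    refine Eq.trans hmap ?_
    refine tsum_congr fun z => ?_
    have : (evalCLM x) (f z • Rop θ hUnit z g2) = f z • ((Rop θ hUnit z g2 : Ltwo n) x) := by
      rw [map_smul]; rfl
    rw [this, Rop_apply, smul_eq_mul]
  have e3 : (∑' z, f z • Rop θ hUnit z g2 : Ltwo n) = deltaL 0 := by
    have hc : ∀ z, f z • Rop θ hUnit z g2
        = ((T.symm : Ltwo n →L[ℂ] Ltwo n)) (f z • Rop θ hUnit z (deltaL 0)) := by
      intro z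
      rw [map_smul]
      congr 1
      show Rop θ hUnit z (T.symm (deltaL 0)) = T.symm (Rop θ hUnit z (deltaL 0))
      exact (Tsymm_comm_R hUnit hne f T hT z (deltaL 0)).symm
    rw [tsum_congr hc, ← ((T.symm : Ltwo n →L[ℂ] Ltwo n)).map_tsum (summable_fR hUnit f hf _)]
    have : (∑' z, f z • Rop θ hUnit z (deltaL (0:Fin n → ℤ))) = T (deltaL 0) :=
      (T_delta hUnit f T hT hf).symm
    rw [this]
    show T.symm (T (deltaL 0)) = deltaL 0
    exact T.symm_apply_apply _
  rw [e1, ← e2, e3]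
  exact congrFun (deltaL_coe (0 : Fin n → ℤ)) x

end St16Seven

open St16 St16Two St16Three St16Four St16Five St16Six St16Seven in
/-- the smooth non-commutative torus S(ℤⁿ, θ) of rapidly decreasing
sequences is inverse-closed in C*(θ): if f is rapidly decreasing and λ(f) is
invertible as a bounded operator on ℓ²(ℤⁿ), then f has a two-sided ♮-inverse
that is rapidly decreasing. -/
theorem statement16 {n : ℕ} (θ : Fin n → Fin n → ℂ)
    (hUnit : ∀ j k, ‖θ j k‖ = 1)
    (hHerm : ∀ j k, θ k j = starRingEnd ℂ (θ j k))
    (hDiag : ∀ j, θ j j = 1)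
    (f : (Fin n → ℤ) → ℂ)
    (hf : RapidDecay f)
    (T : Ltwo n ≃L[ℂ] Ltwo n)
    (hT : ∀ (h : Ltwo n) (x : Fin n → ℤ), (T h : (Fin n → ℤ) → ℂ) x = tconv (coc θ) f (⇑h) x) :
    ∃ g : (Fin n → ℤ) → ℂ, RapidDecay g ∧
      tconv (coc θ) f g = delta 0 ∧ tconv (coc θ) g f = delta 0 := by
  classical
  have hne : ∀ j k, θ j k ≠ 0 := by
    intro j k h0
    have h1 := hUnit j k
    rw [h0, norm_zero] at h1
    norm_num at h1
  set g : (Fin n → ℤ) → ℂ := ⇑(T.symm (deltaL 0)) with hgdef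
  have hPC : PC g := by
    exact ⟨fun t => Ring.inverse (Fser (cA hUnit f) t),
      K_contDiff hUnit f T hT hf, fun t x => K_delta hUnit f T hT hf t x⟩
  have hRD : RapidDecay g := by
    intro s hs
    set m : ℕ := Nat.ceil s with hm
    obtain ⟨C, hC⟩ := (hPC.qpow m).bound
    refine ⟨2 ^ m * C, fun x => ?_⟩
    set S : ℝ := ∑ i, ((x i : ℝ)) ^ 2 with hS
    have hS0 : 0 ≤ S := Finset.sum_nonneg fun i _ => sq_nonneg _
    set e : ℝ := enorm' x with he
    have he0 : 0 ≤ e := enorm'_nonneg x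
    have hE1 : (1 : ℝ) ≤ 1 + e := by linarith
    have hsq : e ^ 2 = S := by
      rw [he, enorm', hS, Real.sq_sqrt]
      exact Finset.sum_nonneg fun i _ => sq_nonneg _
    have h2m : s ≤ ((2 * m : ℕ) : ℝ) := by
      have h1 := Nat.le_ceil s
      have h2 : (m : ℝ) ≤ ((2 * m : ℕ) : ℝ) := by push_cast; linarith [Nat.cast_nonneg (α := ℝ) m]
      exact le_trans h1 h2
    have step1 : (1 + e) ^ s ≤ (1 + e) ^ (2 * m) := by
      have := Real.rpow_le_rpow_of_exponent_le hE1 h2m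
      rwa [Real.rpow_natCast] at this
    have step2 : (1 + e) ^ (2 * m) ≤ 2 ^ m * (1 + S) ^ m := by
      have hbase : (1 + e) ^ 2 ≤ 2 * (1 + S) := by nlinarith [sq_nonneg (e - 1), hsq]
      calc (1 + e) ^ (2 * m) = ((1 + e) ^ 2) ^ m := by rw [pow_mul]
        _ ≤ (2 * (1 + S)) ^ m := pow_le_pow_left₀ (by positivity) hbase m
        _ = 2 ^ m * (1 + S) ^ m := mul_pow 2 (1 + S) m
    have hq : (1 + S) ^ m * ‖g x‖ ≤ C := by
      have hnorm : ‖((1 + S : ℝ) : ℂ) ^ m * g x‖ = (1 + S) ^ m * ‖g x‖ := by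
        rw [norm_mul, norm_pow, Complex.norm_real, Real.norm_eq_abs, abs_of_nonneg (by linarith)]
      rw [← hnorm]
      exact hC x
    calc ‖g x‖ * (1 + e) ^ s ≤ ‖g x‖ * ((1 + e) ^ (2 * m)) :=
          mul_le_mul_of_nonneg_left step1 (norm_nonneg _)
      _ ≤ ‖g x‖ * (2 ^ m * (1 + S) ^ m) :=
          mul_le_mul_of_nonneg_left step2 (norm_nonneg _)
      _ = 2 ^ m * ((1 + S) ^ m * ‖g x‖) := by ring
      _ ≤ 2 ^ m * C := mul_le_mul_of_nonneg_left hq (by positivity)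
  have hleft : tconv (coc θ) f g = delta 0 := by
    funext x
    have h1 : tconv (coc θ) f g x = ((T (T.symm (deltaL 0))) : (Fin n → ℤ) → ℂ) x :=
      (hT (T.symm (deltaL 0)) x).symm
    rw [h1, T.apply_symm_apply]
    exact congrFun (deltaL_coe (0 : Fin n → ℤ)) x
  have hright : tconv (coc θ) g f = delta 0 :=
    right_inverse_eq hUnit hne f T hT hf
  exact ⟨g, hRD, hleft, hright⟩
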